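/- Let L be the (K,D) AIR matrix, k ∈ E_i for i ∈ [0, ⌈l/2⌉−1] with r-th down-distances t_{k,1},...,t_{k,p_k} as above. Then for each τ ∈ [1, p_k], the entry L(k+t_{k,τ}+d_down(k+t_{k,τ}), k+t_{k,τ}) lies in the even-submatrix I_{λ_{2i}×β_{2i}λ_{2i}}, and d_down(k+t_{k,τ}) = d_down(k) = D + λ_{2i+1}; moreover d_up(k+t_{k,τ}+d_down(k+t_{k,τ}), k+t_{k,τ}) = λ_{2i} + λ_{2i+1}. -/
import Mathlib


/-- Entry (j,k) of the AIR matrix of size K × n (n = K - D), as a Boolean. -/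
def airEntry : ℕ → ℕ → ℕ → ℕ → Bool
  | K, n, j, k =>
    if h : n = 0 ∨ K ≤ n then decide (j = k)
    else
      if j < K - K % n then decide (j % n = k % n)
      else
        if k < n - n % (K % n) then decide (k % (K % n) = j - (K - K % n))
        else airEntry (K % n) (n % (K % n)) (j - (K - K % n)) (k - (n - n % (K % n)))
  termination_by K n _ _ => K
  decreasing_by
    push_neg at h
    exact lt_trans (Nat.mod_lt _ (Nat.pos_of_ne_zero h.1)) h.2

/-- The pair (λ_{i-1}, λ_i) of the Euclidean chain, with λ_{-1} = K - D and λ₀ = D. -/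
def lamPair (K D : ℕ) : ℕ → ℕ × ℕ
  | 0 => (K - D, D)
  | i + 1 =>
    let p := lamPair K D i
    (p.2, if p.2 = 0 then 0 else p.1 % p.2)

/-- λ_i of the Euclidean chain. -/
def lam (K D i : ℕ) : ℕ := (lamPair K D i).2

/-- λ_{i-1} of the Euclidean chain (so `lamS K D 0 = K - D`). -/
def lamS (K D i : ℕ) : ℕ := (lamPair K D i).1

/-- β_i = λ_{i-1} / λ_i of the Euclidean chain. -/
def beta (K D i : ℕ) : ℕ := (lamPair K D i).1 / (lamPair K D i).2

/-- down-distance of the diagonal entry L(k,k) of the K × n AIR matrix. -/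
noncomputable def ddown (K n k : ℕ) : ℕ :=
  sSup {t : ℕ | 0 < t ∧ k + t < K ∧ airEntry K n (k + t) k = true}

/-- up-distance of the entry L(j,k) of the K × n AIR matrix. -/
noncomputable def dup (K n j k : ℕ) : ℕ :=
  j - sSup {j' : ℕ | j' < j ∧ airEntry K n j' k = true}

/-- right-distance of the entry L(j,k) of the K × n AIR matrix. -/
noncomputable def dright (K n j k : ℕ) : ℕ :=
  sInf {t : ℕ | 0 < t ∧ k + t < n ∧ airEntry K n j (k + t) = true}


lemma air_top {A B j k : ℕ} (h1 : ¬(B = 0 ∨ A ≤ B)) (h2 : j < A - A % B) :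
    airEntry A B j k = decide (j % B = k % B) := by
  rw [airEntry]; simp [h1, h2]
lemma air_mid {A B j k : ℕ} (h1 : ¬(B = 0 ∨ A ≤ B)) (h2 : ¬j < A - A % B)
    (h3 : k < B - B % (A % B)) :
    airEntry A B j k = decide (k % (A % B) = j - (A - A % B)) := by
  rw [airEntry]; simp [h1, h2, h3]
lemma air_rec {A B j k : ℕ} (h1 : ¬(B = 0 ∨ A ≤ B)) (h2 : ¬j < A - A % B)
    (h3 : ¬k < B - B % (A % B)) :
    airEntry A B j k = airEntry (A % B) (B % (A % B)) (j - (A - A % B)) (k - (B - B % (A % B))) := by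
  rw [airEntry]; simp [h1, h2, h3]
lemma air_diag {A B k : ℕ} (h1 : ¬(B = 0 ∨ A ≤ B)) (hk : k < B) :
    airEntry A B k k = true := by
  have hq := Nat.div_add_mod A B
  have hB : 0 < B := by omega
  have h2 : k < A - A % B := by
    have : 1 ≤ A / B := (Nat.one_le_div_iff hB).mpr (by omega)
    have : B * 1 ≤ B * (A / B) := Nat.mul_le_mul_left B this
    omega
  rw [air_top h1 h2]; simp
lemma mid_dd {A B k : ℕ} (hB : 0 < B) (hBA : B < A) (hA' : A % B ≠ 0) (hk : k < B - B % (A % B)) :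
    k + ddown A B k = (A - A % B) + k % (A % B) := by
  have hq := Nat.div_add_mod A B
  have hq1 : 1 ≤ A / B := (Nat.one_le_div_iff hB).mpr (by omega)
  have hBq : B ≤ B * (A / B) := by calc B = B * 1 := by ring
                                        _ ≤ _ := Nat.mul_le_mul_left B hq1
  have hkB : k < B := by have := Nat.mod_le B (A % B); omega
  have hmod : k % (A % B) < A % B := Nat.mod_lt _ (Nat.pos_of_ne_zero hA')
  have h1 : ¬(B = 0 ∨ A ≤ B) := by omega
  have hIG : IsGreatest {t : ℕ | 0 < t ∧ k + t < A ∧ airEntry A B (k + t) k = true}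
      ((A - A % B) + k % (A % B) - k) := by
    constructor
    · refine ⟨by omega, by omega, ?_⟩
      have hrow : k + ((A - A % B) + k % (A % B) - k) = (A - A % B) + k % (A % B) := by omega
      rw [hrow, air_mid h1 (by omega) hk]
      simp only [decide_eq_true_eq]; omega
    · rintro t ⟨ht0, htA, hte⟩
      by_cases hc : k + t < A - A % B
      · omega
      · rw [air_mid h1 hc hk] at hte
        simp at hte; omega
  show k + sSup _ = _
  rw [hIG.csSup_eq]
  omega
lemma mid_dup {A B k : ℕ} (hB : 0 < B) (hBA : B < A) (hA' : A % B ≠ 0) (hk : k < B - B % (A % B)) :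
    dup A B ((A - A % B) + k % (A % B)) k = B + k % (A % B) - k := by
  have hq := Nat.div_add_mod A B
  have hq1 : 1 ≤ A / B := (Nat.one_le_div_iff hB).mpr (by omega)
  have hBq : B ≤ B * (A / B) := by calc B = B * 1 := by ring
                                        _ ≤ _ := Nat.mul_le_mul_left B hq1
  have hkB : k < B := by have := Nat.mod_le B (A % B); omega
  have h1 : ¬(B = 0 ∨ A ≤ B) := by omega
  have h5 : B * (A / B - 1) + B = B * (A / B) := by
    rw [← Nat.mul_succ]; congr 1; omega
  have hIG : IsGreatest {j' : ℕ | j' < (A - A % B) + k % (A % B) ∧ airEntry A B j' k = true}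
      (k + B * (A / B - 1)) := by
    constructor
    · refine ⟨by omega, ?_⟩
      rw [air_top h1 (by omega)]
      simp only [decide_eq_true_eq]
      rw [Nat.mul_comm B (A / B - 1)]
      exact Nat.add_mul_mod_self_right k (A / B - 1) B
    · rintro j ⟨hj2, hje⟩
      by_cases hc : j < A - A % B
      · rw [air_top h1 hc] at hje
        simp at hje
        rw [Nat.mod_eq_of_lt hkB] at hje
        have hdm := Nat.div_add_mod j B
        have : j / B < A / B := by
          rw [Nat.div_lt_iff_lt_mul hB, Nat.mul_comm]; omega
        have : B * (j / B) ≤ B * (A / B - 1) := Nat.mul_le_mul_left B (by omega)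
        omega
      · rw [air_mid h1 hc hk] at hje
        simp at hje; omega
  show _ - sSup _ = _
  rw [hIG.csSup_eq]
  omega
lemma lift_dd {A B k : ℕ} (hB : 0 < B) (hBA : B < A) (hA' : A % B ≠ 0)
    (hB' : B % (A % B) ≠ 0) (hk1 : B - B % (A % B) ≤ k) (hk2 : k < B) :
    k + ddown A B k =
      (A - A % B) + ((k - (B - B % (A % B))) +
        ddown (A % B) (B % (A % B)) (k - (B - B % (A % B)))) := by
  have hq := Nat.div_add_mod A B
  have hq1 : 1 ≤ A / B := (Nat.one_le_div_iff hB).mpr (by omega)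
  have hBq : B ≤ B * (A / B) := by calc B = B * 1 := by ring
                                        _ ≤ _ := Nat.mul_le_mul_left B hq1
  have h1 : ¬(B = 0 ∨ A ≤ B) := by omega
  have hA'B : A % B < B := Nat.mod_lt _ hB
  have hB'lt : B % (A % B) < A % B := Nat.mod_lt _ (Nat.pos_of_ne_zero hA')
  have hq' := Nat.div_add_mod (A % B) (B % (A % B))
  have hq1' : 1 ≤ (A % B) / (B % (A % B)) :=
    (Nat.one_le_div_iff (Nat.pos_of_ne_zero hB')).mpr (by omega)
  have hBq' : B % (A % B) ≤ (B % (A % B)) * ((A % B) / (B % (A % B))) := by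
    calc B % (A % B) = (B % (A % B)) * 1 := by ring
      _ ≤ _ := Nat.mul_le_mul_left _ hq1'
  have hk'B' : k - (B - B % (A % B)) < B % (A % B) := by omega
  have h1' : ¬(B % (A % B) = 0 ∨ A % B ≤ B % (A % B)) := by omega
  have hd' : ddown (A % B) (B % (A % B)) (k - (B - B % (A % B))) ∈
        {t : ℕ | 0 < t ∧ (k - (B - B % (A % B))) + t < A % B ∧
          airEntry (A % B) (B % (A % B)) ((k - (B - B % (A % B))) + t) (k - (B - B % (A % B))) = true}
      ∨ (ddown (A % B) (B % (A % B)) (k - (B - B % (A % B))) = 0 ∧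
        ∀ t, ¬(0 < t ∧ (k - (B - B % (A % B))) + t < A % B ∧
          airEntry (A % B) (B % (A % B)) ((k - (B - B % (A % B))) + t) (k - (B - B % (A % B))) = true)) := by
    by_cases hne : {t : ℕ | 0 < t ∧ (k - (B - B % (A % B))) + t < A % B ∧
        airEntry (A % B) (B % (A % B)) ((k - (B - B % (A % B))) + t) (k - (B - B % (A % B))) = true}.Nonempty
    · left
      exact Nat.sSup_mem hne ⟨A % B, fun x hx => by
        simp only [Set.mem_setOf_eq] at hx; omega⟩
    · right
      rw [Set.not_nonempty_iff_eq_empty] at hne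
      refine ⟨?_, fun t ht => Set.notMem_empty t (hne ▸ ht)⟩
      show sSup _ = 0
      rw [hne, csSup_empty]; rfl
  have hd'A : (k - (B - B % (A % B))) + ddown (A % B) (B % (A % B)) (k - (B - B % (A % B))) < A % B := by
    rcases hd' with ⟨_, h, _⟩ | ⟨h0, _⟩
    · exact h
    · omega
  have hent : airEntry (A % B) (B % (A % B))
      ((k - (B - B % (A % B))) + ddown (A % B) (B % (A % B)) (k - (B - B % (A % B))))
      (k - (B - B % (A % B))) = true := by
    rcases hd' with ⟨_, _, h⟩ | ⟨h0, _⟩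
    · exact h
    · rw [h0, Nat.add_zero]
      exact air_diag h1' hk'B'
  have hIG : IsGreatest {t : ℕ | 0 < t ∧ k + t < A ∧ airEntry A B (k + t) k = true}
      ((A - A % B) + ((k - (B - B % (A % B))) + ddown (A % B) (B % (A % B)) (k - (B - B % (A % B)))) - k) := by
    constructor
    · refine ⟨by omega, by omega, ?_⟩
      have hrow : k + ((A - A % B) + ((k - (B - B % (A % B))) + ddown (A % B) (B % (A % B)) (k - (B - B % (A % B)))) - k)
          = (A - A % B) + ((k - (B - B % (A % B))) + ddown (A % B) (B % (A % B)) (k - (B - B % (A % B)))) := by omega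
      rw [hrow, air_rec h1 (by omega) (by omega)]
      have heq : A - A % B + ((k - (B - B % (A % B))) + ddown (A % B) (B % (A % B)) (k - (B - B % (A % B)))) - (A - A % B)
          = (k - (B - B % (A % B))) + ddown (A % B) (B % (A % B)) (k - (B - B % (A % B))) := by omega
      rw [heq]
      exact hent
    · rintro t ⟨ht0, htA, hte⟩
      by_cases hc : k + t < A - A % B
      · omega
      · rw [air_rec h1 hc (by omega)] at hte
        by_cases hgt : k - (B - B % (A % B)) < k + t - (A - A % B)
        · have hmem : (k + t - (A - A % B)) - (k - (B - B % (A % B))) ∈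
              {t : ℕ | 0 < t ∧ (k - (B - B % (A % B))) + t < A % B ∧
                airEntry (A % B) (B % (A % B)) ((k - (B - B % (A % B))) + t) (k - (B - B % (A % B))) = true} := by
            refine ⟨by omega, by omega, ?_⟩
            have heq : (k - (B - B % (A % B))) + ((k + t - (A - A % B)) - (k - (B - B % (A % B))))
                = k + t - (A - A % B) := by omega
            rw [heq]
            exact hte
          have hddrfl : ddown (A % B) (B % (A % B)) (k - (B - B % (A % B)))
              = sSup {t : ℕ | 0 < t ∧ (k - (B - B % (A % B))) + t < A % B ∧
                airEntry (A % B) (B % (A % B)) ((k - (B - B % (A % B))) + t) (k - (B - B % (A % B))) = true} := rfl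
          have := le_csSup (⟨A % B, fun x hx => by
            simp only [Set.mem_setOf_eq] at hx; omega⟩ :
              BddAbove {t : ℕ | 0 < t ∧ (k - (B - B % (A % B))) + t < A % B ∧
                airEntry (A % B) (B % (A % B)) ((k - (B - B % (A % B))) + t) (k - (B - B % (A % B))) = true}) hmem
          omega
        · omega
  show k + sSup _ = _
  rw [hIG.csSup_eq]
  omega
lemma lift_dup {A B k j₂ : ℕ} (hB : 0 < B) (hBA : B < A) (hA' : A % B ≠ 0)
    (hB' : B % (A % B) ≠ 0) (hk1 : B - B % (A % B) ≤ k) (hk2 : k < B)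
    (hj : k - (B - B % (A % B)) < j₂) :
    dup A B ((A - A % B) + j₂) k = dup (A % B) (B % (A % B)) j₂ (k - (B - B % (A % B))) := by
  have hq := Nat.div_add_mod A B
  have hq1 : 1 ≤ A / B := (Nat.one_le_div_iff hB).mpr (by omega)
  have hBq : B ≤ B * (A / B) := by calc B = B * 1 := by ring
                                        _ ≤ _ := Nat.mul_le_mul_left B hq1
  have h1 : ¬(B = 0 ∨ A ≤ B) := by omega
  have hA'B : A % B < B := Nat.mod_lt _ hB
  have hB'lt : B % (A % B) < A % B := Nat.mod_lt _ (Nat.pos_of_ne_zero hA')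
  have hk'B' : k - (B - B % (A % B)) < B % (A % B) := by omega
  have hq' := Nat.div_add_mod (A % B) (B % (A % B))
  have hq1' : 1 ≤ (A % B) / (B % (A % B)) :=
    (Nat.one_le_div_iff (Nat.pos_of_ne_zero hB')).mpr (by omega)
  have hBq' : B % (A % B) ≤ (B % (A % B)) * ((A % B) / (B % (A % B))) := by
    calc B % (A % B) = (B % (A % B)) * 1 := by ring
      _ ≤ _ := Nat.mul_le_mul_left _ hq1'
  have h1' : ¬(B % (A % B) = 0 ∨ A % B ≤ B % (A % B)) := by omega
  have hbdd : BddAbove {j' : ℕ | j' < j₂ ∧ airEntry (A % B) (B % (A % B)) j' (k - (B - B % (A % B))) = true} :=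
    ⟨j₂, fun x hx => le_of_lt hx.1⟩
  have hne : {j' : ℕ | j' < j₂ ∧ airEntry (A % B) (B % (A % B)) j' (k - (B - B % (A % B))) = true}.Nonempty :=
    ⟨k - (B - B % (A % B)), hj, air_diag h1' hk'B'⟩
  have hs₂mem := Nat.sSup_mem hne hbdd
  have hs₂lt : sSup {j' : ℕ | j' < j₂ ∧ airEntry (A % B) (B % (A % B)) j' (k - (B - B % (A % B))) = true} < j₂ :=
    hs₂mem.1
  have hIG : IsGreatest {j' : ℕ | j' < (A - A % B) + j₂ ∧ airEntry A B j' k = true}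
      ((A - A % B) + sSup {j' : ℕ | j' < j₂ ∧ airEntry (A % B) (B % (A % B)) j' (k - (B - B % (A % B))) = true}) := by
    constructor
    · refine ⟨by omega, ?_⟩
      rw [air_rec h1 (by omega) (by omega)]
      have heq : A - A % B + sSup {j' : ℕ | j' < j₂ ∧ airEntry (A % B) (B % (A % B)) j' (k - (B - B % (A % B))) = true} - (A - A % B)
          = sSup {j' : ℕ | j' < j₂ ∧ airEntry (A % B) (B % (A % B)) j' (k - (B - B % (A % B))) = true} := by omega
      rw [heq]
      exact hs₂mem.2
    · rintro j ⟨hjlt, hje⟩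
      by_cases hc : j < A - A % B
      · omega
      · rw [air_rec h1 hc (by omega)] at hje
        have hmem : (j - (A - A % B)) ∈
            {j' : ℕ | j' < j₂ ∧ airEntry (A % B) (B % (A % B)) j' (k - (B - B % (A % B))) = true} :=
          ⟨by omega, hje⟩
        have := le_csSup hbdd hmem
        omega
  show _ - sSup _ = _
  rw [hIG.csSup_eq]
  show _ = _ - sSup _
  omega
lemma lamS_succ (K D j : ℕ) : lamS K D (j + 1) = lam K D j := rfl
lemma lam_succ (K D j : ℕ) :
    lam K D (j + 1) = if lam K D j = 0 then 0 else lamS K D j % lam K D j := rfl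
lemma lam_succ_le (K D j : ℕ) : lam K D (j + 1) ≤ lam K D j := by
  rw [lam_succ]
  split
  · omega
  · exact le_of_lt (Nat.mod_lt _ (by omega))
lemma lam_anti (K D : ℕ) {j J : ℕ} (h : j ≤ J) : lam K D J ≤ lam K D j := by
  induction J with
  | zero => simp_all
  | succ J ih =>
    rcases Nat.lt_or_ge j (J+1) with h'|h'
    · exact le_trans (lam_succ_le K D J) (ih (by omega))
    · have : j = J + 1 := by omega
      simp [this]
lemma lam_ne_zero_of_le (K D : ℕ) {j J : ℕ} (h : j ≤ J) (hJ : lam K D J ≠ 0) :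
    lam K D j ≠ 0 := by
  intro h0
  have := lam_anti K D h
  omega
lemma lam_succ_lt (K D j : ℕ) (h : lam K D j ≠ 0) : lam K D (j + 1) < lam K D j := by
  rw [lam_succ, if_neg h]
  exact Nat.mod_lt _ (by omega)
lemma lamS_eq (K D j : ℕ) (h : lam K D j ≠ 0) :
    lamS K D j = beta K D j * lam K D j + lam K D (j + 1) := by
  have h2 := Nat.div_add_mod (lamPair K D j).1 (lamPair K D j).2
  rw [lam_succ, if_neg h, beta, lamS, lam, Nat.mul_comm]
  omega
lemma lam_le_lamS (K D : ℕ) (h0 : D ≤ K - D) (j : ℕ) : lam K D j ≤ lamS K D j := by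
  cases j with
  | zero => exact h0
  | succ j =>
    rw [lamS_succ, lam_succ]
    split
    · omega
    · exact le_of_lt (Nat.mod_lt _ (by omega))
lemma lamPair_shift (K D j : ℕ) :
    lamPair K D (j + 2) = lamPair (lam K D 1 + lam K D 2) (lam K D 2) j := by
  induction j with
  | zero =>
    show lamPair K D 2 = _
    have : lamPair (lam K D 1 + lam K D 2) (lam K D 2) 0
        = (lam K D 1, lam K D 2) := by
      simp [lamPair]
    rw [this]
    have h2 : lamPair K D 2 = ((lamPair K D 1).2, (lamPair K D 2).2) := rfl
    rw [h2]; rfl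
  | succ j ih =>
    have h1 : lamPair K D (j + 2 + 1)
        = ((lamPair K D (j+2)).2, if (lamPair K D (j+2)).2 = 0 then 0
            else (lamPair K D (j+2)).1 % (lamPair K D (j+2)).2) := rfl
    rw [h1, ih]; rfl
theorem GENbase (A B k c d t : ℕ) (hB : 0 < B) (hBA : B < A)
    (hch : lam (B + A % B) (A % B) 1 ≠ 0)
    (hk1 : B - lamS (B + A % B) (A % B) 0 + (beta (B + A % B) (A % B) 0 - 1) * lam (B + A % B) (A % B) 0 ≤ k)
    (hk2 : k < B - lam (B + A % B) (A % B) 1)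
    (hkR : k % (B - lamS (B + A % B) (A % B) 0) =
      (beta (B + A % B) (A % B) 0 - 1) * lam (B + A % B) (A % B) 0 + c * lam (B + A % B) (A % B) 1 + d)
    (hd : d < lam (B + A % B) (A % B) 1)
    (ht0 : 0 < t) (htK : k + ddown A B k + t < A)
    (hte : airEntry A B (k + ddown A B k + t)
      (k + (lam (B + A % B) (A % B) 0 - c * lam (B + A % B) (A % B) 1)) = true) :
    (A - lam (B + A % B) (A % B) 0 ≤ k + t + ddown A B (k + t) ∧ k + t + ddown A B (k + t) < A) ∧
    (B - lamS (B + A % B) (A % B) 0 ≤ k + t ∧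
      k + t < B - lamS (B + A % B) (A % B) 0 + beta (B + A % B) (A % B) 0 * lam (B + A % B) (A % B) 0) ∧
    ddown A B (k + t) = ddown A B k ∧
    ddown A B k = (A - B) + lam (B + A % B) (A % B) 1 ∧
    dup A B (k + t + ddown A B (k + t)) (k + t) =
      lam (B + A % B) (A % B) 0 + lam (B + A % B) (A % B) 1 := by
  have hC0 : lam (B + A % B) (A % B) 0 = A % B := rfl
  have hCS0 : lamS (B + A % B) (A % B) 0 = B := by
    show B + A % B - A % B = B
    omega
  have hC0ne : lam (B + A % B) (A % B) 0 ≠ 0 := lam_ne_zero_of_le _ _ (by omega) hch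
  have hA' : A % B ≠ 0 := by rwa [hC0] at hC0ne
  have hC1 : lam (B + A % B) (A % B) 1 = B % (A % B) := by
    rw [lam_succ, if_neg hC0ne, hCS0, hC0]
  have hA'B : A % B < B := Nat.mod_lt _ hB
  have hB'lt : B % (A % B) < A % B := Nat.mod_lt _ (Nat.pos_of_ne_zero hA')
  have hq := Nat.div_add_mod A B
  have hq1 : 1 ≤ A / B := (Nat.one_le_div_iff hB).mpr (by omega)
  have hBq : B ≤ B * (A / B) := by calc B = B * 1 := by ring
                                        _ ≤ _ := Nat.mul_le_mul_left B hq1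
  have hbeta : lamS (B + A % B) (A % B) 0 =
      beta (B + A % B) (A % B) 0 * lam (B + A % B) (A % B) 0 + lam (B + A % B) (A % B) 1 :=
    lamS_eq _ _ 0 hC0ne
  have hb1 : 1 ≤ beta (B + A % B) (A % B) 0 := by
    have : lam (B + A % B) (A % B) 0 ≤ lamS (B + A % B) (A % B) 0 := by omega
    rw [beta]
    exact (Nat.one_le_div_iff (Nat.pos_of_ne_zero hC0ne)).mpr this
  have hY : (beta (B + A % B) (A % B) 0 - 1) * lam (B + A % B) (A % B) 0 + lam (B + A % B) (A % B) 0
      = beta (B + A % B) (A % B) 0 * lam (B + A % B) (A % B) 0 := by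
    rw [Nat.sub_one_mul]
    have := Nat.le_mul_of_pos_left (lam (B + A % B) (A % B) 0) (by omega : 0 < beta (B + A % B) (A % B) 0)
    omega
  -- k = (β₀-1)ν₀ + (c ν₁ + d)
  have hkR' : k = (beta (B + A % B) (A % B) 0 - 1) * lam (B + A % B) (A % B) 0
      + (c * lam (B + A % B) (A % B) 1 + d) := by
    rw [hCS0] at hkR
    simp only [Nat.sub_self, Nat.mod_zero] at hkR
    omega
  have hX : (beta (B + A % B) (A % B) 0 - 1) * (A % B)
      = (beta (B + A % B) (A % B) 0 - 1) * lam (B + A % B) (A % B) 0 := by rw [hC0]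
  have hAA : A - A % B = B * (A / B) := by omega
  have hsmall : c * lam (B + A % B) (A % B) 1 + d < lam (B + A % B) (A % B) 0 := by omega
  have hkmod : k % (A % B) = c * lam (B + A % B) (A % B) 1 + d := by
    have h1 : k = (c * lam (B + A % B) (A % B) 1 + d)
        + (beta (B + A % B) (A % B) 0 - 1) * (A % B) := by omega
    rw [h1, Nat.add_mul_mod_self_right, Nat.mod_eq_of_lt (by omega)]
  have hmid : k < B - B % (A % B) := by omega
  have E1 := mid_dd hB hBA hA' hmid
  -- t is small
  have htsmall : c * lam (B + A % B) (A % B) 1 + d + t < A % B := by omega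
  have hktmod : (k + t) % (A % B) = c * lam (B + A % B) (A % B) 1 + d + t := by
    have h1 : k + t = (c * lam (B + A % B) (A % B) 1 + d + t)
        + (beta (B + A % B) (A % B) 0 - 1) * (A % B) := by omega
    rw [h1, Nat.add_mul_mod_self_right, Nat.mod_eq_of_lt (by omega)]
  have hmid2 : k + t < B - B % (A % B) := by omega
  have E2 := mid_dd hB hBA hA' hmid2
  have E3 := mid_dup hB hBA hA' hmid2
  refine ⟨⟨by omega, by omega⟩, ⟨by omega, by omega⟩, by omega, by omega, ?_⟩
  have harg : k + t + ddown A B (k + t) = (A - A % B) + (k + t) % (A % B) := E2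
  rw [harg, E3]
  omega
theorem GEN (i : ℕ) : ∀ A B k c d t : ℕ, 0 < B → B < A →
    lam (B + A % B) (A % B) (2*i+1) ≠ 0 →
    B - lamS (B + A % B) (A % B) (2*i) + (beta (B + A % B) (A % B) (2*i) - 1) * lam (B + A % B) (A % B) (2*i) ≤ k →
    k < B - lam (B + A % B) (A % B) (2*i+1) →
    k % (B - lamS (B + A % B) (A % B) (2*i)) =
      (beta (B + A % B) (A % B) (2*i) - 1) * lam (B + A % B) (A % B) (2*i) + c * lam (B + A % B) (A % B) (2*i+1) + d →
    d < lam (B + A % B) (A % B) (2*i+1) →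
    0 < t → k + ddown A B k + t < A →
    airEntry A B (k + ddown A B k + t)
      (k + (lam (B + A % B) (A % B) (2*i) - c * lam (B + A % B) (A % B) (2*i+1))) = true →
    (A - lam (B + A % B) (A % B) (2*i) ≤ k + t + ddown A B (k + t) ∧ k + t + ddown A B (k + t) < A) ∧
    (B - lamS (B + A % B) (A % B) (2*i) ≤ k + t ∧
      k + t < B - lamS (B + A % B) (A % B) (2*i) + beta (B + A % B) (A % B) (2*i) * lam (B + A % B) (A % B) (2*i)) ∧
    ddown A B (k + t) = ddown A B k ∧
    ddown A B k = (A - B) + lam (B + A % B) (A % B) (2*i+1) ∧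
    dup A B (k + t + ddown A B (k + t)) (k + t) =
      lam (B + A % B) (A % B) (2*i) + lam (B + A % B) (A % B) (2*i+1) := by
  induction i with
  | zero =>
    intro A B k c d t hB hBA hch hk1 hk2 hkR hd ht0 htK hte
    simp only [Nat.mul_zero, Nat.zero_add] at hch hk1 hk2 hkR hd hte ⊢
    exact GENbase A B k c d t hB hBA hch hk1 hk2 hkR hd ht0 htK hte
  | succ i IH =>
    intro A B k c d t hB hBA hch hk1 hk2 hkR hd ht0 htK hte
    have e1 : 2*(i+1) = 2*i+2 := by ring
    rw [e1] at hch hk1 hk2 hkR hd hte ⊢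
    -- basic chain values
    have hC0 : lam (B + A % B) (A % B) 0 = A % B := rfl
    have hCS0 : lamS (B + A % B) (A % B) 0 = B := by
      show B + A % B - A % B = B
      omega
    have hC0ne : lam (B + A % B) (A % B) 0 ≠ 0 := lam_ne_zero_of_le _ _ (by omega) hch
    have hC1ne : lam (B + A % B) (A % B) 1 ≠ 0 := lam_ne_zero_of_le _ _ (by omega) hch
    have hC2ne : lam (B + A % B) (A % B) 2 ≠ 0 := lam_ne_zero_of_le _ _ (by omega) hch
    have hC2i1ne : lam (B + A % B) (A % B) (2*i+1) ≠ 0 := lam_ne_zero_of_le _ _ (by omega) hch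
    have hC2i2ne : lam (B + A % B) (A % B) (2*i+2) ≠ 0 := lam_ne_zero_of_le _ _ (by omega) hch
    have hA' : A % B ≠ 0 := by rwa [hC0] at hC0ne
    have hC1 : lam (B + A % B) (A % B) 1 = B % (A % B) := by
      rw [lam_succ, if_neg hC0ne, hCS0, hC0]
    have hB'ne : B % (A % B) ≠ 0 := by rw [← hC1]; exact hC1ne
    have hC2 : lam (B + A % B) (A % B) 2 = A % B % (B % (A % B)) := by
      rw [show (2:ℕ) = 1 + 1 from rfl, lam_succ, if_neg hC1ne, lamS_succ, hC0, hC1]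
    have hA'B : A % B < B := Nat.mod_lt _ hB
    have hB'lt : B % (A % B) < A % B := Nat.mod_lt _ (Nat.pos_of_ne_zero hA')
    have hq := Nat.div_add_mod A B
    have hq1 : 1 ≤ A / B := (Nat.one_le_div_iff hB).mpr (by omega)
    have hBq : B ≤ B * (A / B) := by calc B = B * 1 := by ring
                                          _ ≤ _ := Nat.mul_le_mul_left B hq1
    -- shift of the chain
    have hpairshift : ∀ j, lamPair (B + A % B) (A % B) (j+2)
        = lamPair (B % (A % B) + A % B % (B % (A % B))) (A % B % (B % (A % B))) j := by
      intro j
      have h := lamPair_shift (B + A % B) (A % B) j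
      rw [hC1, hC2] at h
      exact h
    have hsub20 : lam (B % (A % B) + A % B % (B % (A % B))) (A % B % (B % (A % B))) (2*i)
        = lam (B + A % B) (A % B) (2*i+2) := by
      rw [lam, lam, hpairshift (2*i)]
    have hsub21 : lam (B % (A % B) + A % B % (B % (A % B))) (A % B % (B % (A % B))) (2*i+1)
        = lam (B + A % B) (A % B) (2*i+2+1) := by
      rw [lam, lam, ← hpairshift (2*i+1), show 2*i+1+2 = 2*i+2+1 by ring]
    have hsubS : lamS (B % (A % B) + A % B % (B % (A % B))) (A % B % (B % (A % B))) (2*i)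
        = lam (B + A % B) (A % B) (2*i+1) := by
      rw [lamS, ← hpairshift (2*i)]
      show lamS (B + A % B) (A % B) (2*i+2) = _
      rw [show 2*i+2 = (2*i+1)+1 by ring, lamS_succ]
    have hb2i : beta (B % (A % B) + A % B % (B % (A % B))) (A % B % (B % (A % B))) (2*i)
        = beta (B + A % B) (A % B) (2*i+2) := by
      rw [beta, beta, hpairshift (2*i)]
    -- chain inequalities
    have hdec1 : lam (B + A % B) (A % B) 1 < lam (B + A % B) (A % B) 0 := lam_succ_lt _ _ 0 hC0ne
    have hanti31 : lam (B + A % B) (A % B) (2*i+1) ≤ lam (B + A % B) (A % B) 1 :=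
      lam_anti _ _ (by omega)
    have hanti3 : lam (B + A % B) (A % B) (2*i+2+1) ≤ lam (B + A % B) (A % B) (2*i+1) :=
      lam_anti _ _ (by omega)
    have hdec23 : lam (B + A % B) (A % B) (2*i+2+1) < lam (B + A % B) (A % B) (2*i+2) := by
      have := lam_succ_lt (B + A % B) (A % B) (2*i+2) hC2i2ne
      omega
    have hS : lamS (B + A % B) (A % B) (2*i+2) = lam (B + A % B) (A % B) (2*i+1) := by
      rw [show 2*i+2 = (2*i+1)+1 by ring, lamS_succ]
    have hβ0 : lamS (B + A % B) (A % B) (2*i+2)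
        = beta (B + A % B) (A % B) (2*i+2) * lam (B + A % B) (A % B) (2*i+2)
          + lam (B + A % B) (A % B) (2*i+2+1) := by
      have := lamS_eq (B + A % B) (A % B) (2*i+2) hC2i2ne
      rw [show (2*i+2)+1 = 2*i+2+1 by ring] at this
      exact this
    have hβ : lam (B + A % B) (A % B) (2*i+1)
        = beta (B + A % B) (A % B) (2*i+2) * lam (B + A % B) (A % B) (2*i+2)
          + lam (B + A % B) (A % B) (2*i+2+1) := by rw [← hS]; exact hβ0
    have hb1 : 1 ≤ beta (B + A % B) (A % B) (2*i+2) := by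
      have h1 : lam (B + A % B) (A % B) (2*i+2) ≤ lam (B + A % B) (A % B) (2*i+1) :=
        lam_anti _ _ (by omega)
      rw [beta]
      refine (Nat.one_le_div_iff (Nat.pos_of_ne_zero hC2i2ne)).mpr ?_
      show lam _ _ (2*i+2) ≤ lamS _ _ (2*i+2)
      omega
    have hY : (beta (B + A % B) (A % B) (2*i+2) - 1) * lam (B + A % B) (A % B) (2*i+2)
          + lam (B + A % B) (A % B) (2*i+2)
        = beta (B + A % B) (A % B) (2*i+2) * lam (B + A % B) (A % B) (2*i+2) := by
      rw [Nat.sub_one_mul]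
      have := Nat.le_mul_of_pos_left (lam (B + A % B) (A % B) (2*i+2))
        (by omega : 0 < beta (B + A % B) (A % B) (2*i+2))
      omega
    have hbeta0 : B = beta (B + A % B) (A % B) 0 * lam (B + A % B) (A % B) 0
        + lam (B + A % B) (A % B) 1 := by
      have h := lamS_eq (B + A % B) (A % B) 0 hC0ne
      norm_num at h
      omega
    have hb01 : lam (B + A % B) (A % B) 0 ≤ beta (B + A % B) (A % B) 0 * lam (B + A % B) (A % B) 0 := by
      refine Nat.le_mul_of_pos_left _ ?_
      have : 1 ≤ beta (B + A % B) (A % B) 0 := by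
        rw [beta]
        refine (Nat.one_le_div_iff (Nat.pos_of_ne_zero hC0ne)).mpr ?_
        show lam _ _ 0 ≤ lamS _ _ 0
        omega
      omega
    -- N1 ≥ 2 N(2i+1) when N(2i+1) < N1
    have hN1ge : lam (B + A % B) (A % B) (2*i+1) < lam (B + A % B) (A % B) 1 →
        2 * lam (B + A % B) (A % B) (2*i+1) ≤ lam (B + A % B) (A % B) 1 := by
      intro hlt
      rcases Nat.eq_zero_or_pos i with rfl | hip
      · simp only [Nat.mul_zero, Nat.zero_add] at hlt; omega
      · have h31 : (3:ℕ) ≤ 2*i+1 := by omega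
        have ha : lam (B + A % B) (A % B) (2*i+1) ≤ lam (B + A % B) (A % B) 3 :=
          lam_anti _ _ h31
        have hS2 : lamS (B + A % B) (A % B) 2 = lam (B + A % B) (A % B) 1 := lamS_succ _ _ 1
        have h12 : lam (B + A % B) (A % B) 1
            = beta (B + A % B) (A % B) 2 * lam (B + A % B) (A % B) 2
              + lam (B + A % B) (A % B) 3 := by
          have := lamS_eq (B + A % B) (A % B) 2 hC2ne
          rw [hS2] at this
          rw [this]
        have h23 : lam (B + A % B) (A % B) 3 ≤ lam (B + A % B) (A % B) 2 := lam_succ_le _ _ 2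
        have hY2 : lam (B + A % B) (A % B) 2 ≤ beta (B + A % B) (A % B) 2 * lam (B + A % B) (A % B) 2 := by
          refine Nat.le_mul_of_pos_left _ ?_
          have hle : lam (B + A % B) (A % B) 2 ≤ lam (B + A % B) (A % B) 1 :=
            lam_succ_le _ _ 1
          have : 1 ≤ beta (B + A % B) (A % B) 2 := by
            rw [beta]
            refine (Nat.one_le_div_iff (Nat.pos_of_ne_zero hC2ne)).mpr ?_
            show lam _ _ 2 ≤ lamS _ _ 2
            rw [hS2]
            omega
          omega
        omega
    -- linearize hkR
    rw [hS] at hkR hk1 ⊢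
    have hkmge : B - lam (B + A % B) (A % B) (2*i+1) ≤ k := by omega
    have hmodk : k % (B - lam (B + A % B) (A % B) (2*i+1))
        = k - (B - lam (B + A % B) (A % B) (2*i+1)) := by
      rw [Nat.mod_eq_sub_mod hkmge]
      refine Nat.mod_eq_of_lt ?_
      omega
    rw [hmodk] at hkR
    have hcb : c * lam (B + A % B) (A % B) (2*i+2+1) + d < lam (B + A % B) (A % B) (2*i+2) := by
      omega
    -- lift ddown at k
    have E1 := lift_dd hB hBA hA' hB'ne (by omega) (by omega : k < B)
    have htK' : (k - (B - B % (A % B))) + ddown (A % B) (B % (A % B)) (k - (B - B % (A % B))) + t < A % B := by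
      omega
    -- transfer hte
    have hte' : airEntry (A % B) (B % (A % B))
        ((k - (B - B % (A % B))) + ddown (A % B) (B % (A % B)) (k - (B - B % (A % B))) + t)
        ((k - (B - B % (A % B))) + (lam (B + A % B) (A % B) (2*i+2)
          - c * lam (B + A % B) (A % B) (2*i+2+1))) = true := by
      have hrow : k + ddown A B k + t
          = (A - A % B) + ((k - (B - B % (A % B))) + ddown (A % B) (B % (A % B)) (k - (B - B % (A % B))) + t) := by
        omega
      rw [hrow] at hte
      rw [air_rec (by omega) (by omega) (by omega)] at hte
      have h6 : (A - A % B) + ((k - (B - B % (A % B))) + ddown (A % B) (B % (A % B)) (k - (B - B % (A % B))) + t)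
          - (A - A % B)
          = (k - (B - B % (A % B))) + ddown (A % B) (B % (A % B)) (k - (B - B % (A % B))) + t := by omega
      have h7 : k + (lam (B + A % B) (A % B) (2*i+2) - c * lam (B + A % B) (A % B) (2*i+2+1))
            - (B - B % (A % B))
          = (k - (B - B % (A % B))) + (lam (B + A % B) (A % B) (2*i+2)
            - c * lam (B + A % B) (A % B) (2*i+2+1)) := by omega
      rw [h6, h7] at hte
      exact hte
    -- apply IH
    have IHres := IH (A % B) (B % (A % B)) (k - (B - B % (A % B))) c d t
      (Nat.pos_of_ne_zero hB'ne) hB'lt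
      (by rw [hsub21]; exact hch)
      (by rw [hsubS, hsub20, hb2i]; omega)
      (by rw [hsub21]; omega)
      (by
        rw [hsubS, hsub20, hsub21, hb2i]
        by_cases hm' : B % (A % B) - lam (B + A % B) (A % B) (2*i+1) = 0
        · rw [hm', Nat.mod_zero]
          omega
        · have hlt : lam (B + A % B) (A % B) (2*i+1) < lam (B + A % B) (A % B) 1 := by omega
          have h2m := hN1ge hlt
          have hge : B % (A % B) - lam (B + A % B) (A % B) (2*i+1) ≤ k - (B - B % (A % B)) := by
            omega
          rw [Nat.mod_eq_sub_mod hge]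
          rw [Nat.mod_eq_of_lt (by omega)]
          omega)
      (by rw [hsub21]; exact hd)
      ht0 htK' (by rw [hsub20, hsub21]; exact hte')
    rw [hsubS, hsub20, hsub21, hb2i] at IHres
    obtain ⟨⟨hIH1a, hIH1b⟩, ⟨hIH2a, hIH2b⟩, hIH3, hIH4, hIH5⟩ := IHres
    -- region of k+t
    have hrecl : B - B % (A % B) ≤ k + t := by omega
    have hrecu : k + t < B := by omega
    -- lift ddown at k+t
    have E2 := lift_dd hB hBA hA' hB'ne hrecl hrecu
    have hal : k + t - (B - B % (A % B)) = k - (B - B % (A % B)) + t := by omega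
    rw [hal] at E2
    refine ⟨⟨by omega, by omega⟩, ⟨by omega, by omega⟩, by omega, by omega, ?_⟩
    -- dup conclusion
    have E5 := lift_dup hB hBA hA' hB'ne hrecl hrecu
      (j₂ := (k - (B - B % (A % B)) + t)
        + ddown (A % B) (B % (A % B)) (k - (B - B % (A % B)) + t))
      (by omega)
    rw [hal] at E5
    rw [E2, E5]
    exact hIH5

/-- For k ∈ E_i and each r-th down-distance t of L(k+d_down(k), k+μ_k): the bottom one of
column k+t lies in the even submatrix I_{λ_{2i}×β_{2i}λ_{2i}}, d_down(k+t) = d_down(k)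
= D + λ_{2i+1}, and d_up(k+t+d_down(k+t), k+t) = λ_{2i} + λ_{2i+1}. -/
theorem stmt19 (K D l i k c d t : ℕ) (hD : 0 < D) (hDK : D < K)
    (hl : lam K D (l + 1) = 0) (hmin : ∀ j ≤ l, lam K D j ≠ 0)
    (hi : 2 * i + 1 ≤ l)
    (hk1 : K - D - lamS K D (2 * i) + (beta K D (2 * i) - 1) * lam K D (2 * i) ≤ k)
    (hk2 : k < K - D - lam K D (2 * i + 1))
    (hkR : k % (K - D - lamS K D (2 * i)) =
      (beta K D (2 * i) - 1) * lam K D (2 * i) + c * lam K D (2 * i + 1) + d)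
    (hd : d < lam K D (2 * i + 1))
    (ht0 : 0 < t) (htK : k + ddown K (K - D) k + t < K)
    (hte : airEntry K (K - D) (k + ddown K (K - D) k + t)
      (k + (lam K D (2 * i) - c * lam K D (2 * i + 1))) = true) :
    (K - lam K D (2 * i) ≤ k + t + ddown K (K - D) (k + t) ∧
      k + t + ddown K (K - D) (k + t) < K) ∧
    (K - D - lamS K D (2 * i) ≤ k + t ∧
      k + t < K - D - lamS K D (2 * i) + beta K D (2 * i) * lam K D (2 * i)) ∧
    ddown K (K - D) (k + t) = ddown K (K - D) k ∧
    ddown K (K - D) k = D + lam K D (2 * i + 1) ∧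
    dup K (K - D) (k + t + ddown K (K - D) (k + t)) (k + t) =
      lam K D (2 * i) + lam K D (2 * i + 1) := by
  have hB : 0 < K - D := by omega
  have hBA : K - D < K := by omega
  have hlamD : lam K D 0 = D := rfl
  have hlamSD : lamS K D 0 = K - D := rfl
  have hD0 : lam K D 0 ≠ 0 := by rw [hlamD]; omega
  have hlam1 : lam K D 1 = (K - D) % D := by
    rw [lam_succ, if_neg hD0, hlamSD, hlamD]
  have hl1 : (1:ℕ) ≤ l := by omega
  have hlam1ne : lam K D 1 ≠ 0 := hmin 1 hl1
  have hch : lam K D (2 * i + 1) ≠ 0 := hmin _ hi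
  have hDn : D ≠ K - D := by
    intro h
    rw [hlam1, ← h, Nat.mod_self] at hlam1ne
    exact hlam1ne rfl
  rcases Nat.lt_or_ge D (K - D) with hlt | hge
  · -- D < K - D
    have hKmod : K % (K - D) = D := by
      have h2 : K = (K - D) + D := by omega
      calc K % (K - D) = ((K - D) + D) % (K - D) := by rw [← h2]
        _ = D % (K - D) := Nat.add_mod_left _ _
        _ = D := Nat.mod_eq_of_lt hlt
    have hKeq : (K - D) + K % (K - D) = K := by omega
    have hL : ∀ j, lam ((K - D) + K % (K - D)) (K % (K - D)) j = lam K D j := by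
      intro j; rw [hKeq, hKmod]
    have hLS : ∀ j, lamS ((K - D) + K % (K - D)) (K % (K - D)) j = lamS K D j := by
      intro j; rw [hKeq, hKmod]
    have hLb : ∀ j, beta ((K - D) + K % (K - D)) (K % (K - D)) j = beta K D j := by
      intro j; rw [hKeq, hKmod]
    have G := GEN i K (K - D) k c d t hB hBA
      (by rw [hL]; exact hch)
      (by rw [hLS, hLb, hL]; exact hk1)
      (by rw [hL]; exact hk2)
      (by rw [hLS, hLb, hL, hL]; exact hkR)
      (by rw [hL]; exact hd)
      ht0 htK
      (by rw [hL, hL]; exact hte)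
    rw [hL, hL, hLS, hLb, show K - (K - D) = D by omega] at G
    exact G
  · -- D > K - D
    have hgt : K - D < D := by omega
    have hlam1' : lam K D 1 = K - D := by
      rw [hlam1]; exact Nat.mod_eq_of_lt hgt
    have hKmod : K % (K - D) = D % (K - D) := by
      have h2 : K = (K - D) + D := by omega
      calc K % (K - D) = ((K - D) + D) % (K - D) := by rw [← h2]
        _ = D % (K - D) := Nat.add_mod_left _ _
    have hlam2 : lam K D 2 = D % (K - D) := by
      rw [show (2:ℕ) = 1 + 1 from rfl, lam_succ, if_neg hlam1ne, lamS_succ, hlamD, hlam1']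
    cases i with
    | zero =>
      exfalso
      rw [show 2 * 0 + 1 = 1 by ring, hlam1'] at hk2
      omega
    | succ i' =>
      have e1 : 2 * (i' + 1) = 2 * i' + 2 := by ring
      rw [e1] at hk1 hk2 hkR hd hte hch hi ⊢
      have hGL : ∀ j, lam ((K - D) + K % (K - D)) (K % (K - D)) j = lam K D (j + 2) := by
        intro j
        have h := lamPair_shift K D j
        rw [hlam1', hlam2] at h
        rw [hKmod, lam, lam, h]
      have hGLS : ∀ j, lamS ((K - D) + K % (K - D)) (K % (K - D)) j = lamS K D (j + 2) := by
        intro j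
        have h := lamPair_shift K D j
        rw [hlam1', hlam2] at h
        rw [hKmod, lamS, lamS, h]
      have hGLb : ∀ j, beta ((K - D) + K % (K - D)) (K % (K - D)) j = beta K D (j + 2) := by
        intro j
        have h := lamPair_shift K D j
        rw [hlam1', hlam2] at h
        rw [hKmod, beta, beta, h]
      have hGL1 : lam ((K - D) + K % (K - D)) (K % (K - D)) (2 * i' + 1) = lam K D (2 * i' + 2 + 1) := by
        rw [hGL (2 * i' + 1), show 2 * i' + 1 + 2 = 2 * i' + 2 + 1 by ring]
      have hGLS0 : lamS ((K - D) + K % (K - D)) (K % (K - D)) (2 * i') = lamS K D (2 * i' + 2) := hGLS (2 * i')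
      have G := GEN i' K (K - D) k c d t hB hBA
        (by rw [hGL1]; exact hch)
        (by rw [hGLS0, hGLb, hGL]; exact hk1)
        (by rw [hGL1]; exact hk2)
        (by rw [hGLS0, hGLb, hGL, hGL1]; exact hkR)
        (by rw [hGL1]; exact hd)
        ht0 htK
        (by rw [hGL, hGL1]; exact hte)
      rw [hGL, hGL1, hGLS0, hGLb, show K - (K - D) = D by omega] at G
      exact G
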